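/- Let k < l be integers, let S = {2k−1, 2k, …, 2l+1}, and let Q = Q[k,l] be the Nicolai supercharge on ℋ_S. For a configuration g : {2k, …, 2l} → Bool, the following are equivalent: (i) for every extension ĝ : S → Bool of g (i.e., every choice of values ĝ(2k−1), ĝ(2l+1) ∈ Bool), the basis vector e_{ĝ} satisfies Q e_{ĝ} = 0 and Q* e_{ĝ} = 0; (ii) g ∈ Υ̂_{k,l}. (Classical open-edge supersymmetric states on a finite interval correspond exactly to configurations satisfying the open SUSY boundary condition.) -/

import Mathlib

namespace Nicolai

/-- Configurations on the finite interval `S = {a, …, b}` of integers: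
`true` = occupied, `false` = empty. -/
abbrev Config (a b : ℤ) : Type := {i : ℤ // i ∈ Finset.Icc a b} → Bool

/-- The Hilbert space `ℋ_S` with orthonormal basis indexed by configurations. -/
abbrev Hs (a b : ℤ) : Type := EuclideanSpace ℂ (Config a b)

/-- The basis vector `e_g` associated to the configuration `g`. -/
noncomputable def e (a b : ℤ) (g : Config a b) : Hs a b := EuclideanSpace.single g 1

/-- The Jordan–Wigner sign exponent: the number of occupied sites strictly to the left of `i`. -/
noncomputable def signCount (a b : ℤ) (g : Config a b) (i : ℤ) : ℕ :=
  (Finset.univ.filter fun j : {x : ℤ // x ∈ Finset.Icc a b} => j.1 < i ∧ g j = true).card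

/-- The annihilation operator `c_i` (zero if `i ∉ S`). -/
noncomputable def cAnn (a b : ℤ) (i : ℤ) : Module.End ℂ (Hs a b) where
  toFun ψ := WithLp.toLp 2 fun g =>
    if hi : i ∈ Finset.Icc a b then
      if g ⟨i, hi⟩ = false then
        ((-1 : ℂ) ^ signCount a b g i) * ψ (Function.update g ⟨i, hi⟩ true)
      else 0
    else 0
  map_add' ψ φ := by
    ext g
    simp only [PiLp.add_apply]
    split_ifs <;> simp [mul_add]
  map_smul' c ψ := by
    ext g
    simp only [PiLp.smul_apply, smul_eq_mul, RingHom.id_apply]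
    split_ifs <;> ring

/-- The creation operator `c*_i` (zero if `i ∉ S`). -/
noncomputable def cCr (a b : ℤ) (i : ℤ) : Module.End ℂ (Hs a b) where
  toFun ψ := WithLp.toLp 2 fun g =>
    if hi : i ∈ Finset.Icc a b then
      if g ⟨i, hi⟩ = true then
        ((-1 : ℂ) ^ signCount a b g i) * ψ (Function.update g ⟨i, hi⟩ false)
      else 0
    else 0
  map_add' ψ φ := by
    ext g
    simp only [PiLp.add_apply]
    split_ifs <;> simp [mul_add]
  map_smul' c ψ := by
    ext g
    simp only [PiLp.smul_apply, smul_eq_mul, RingHom.id_apply]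
    split_ifs <;> ring

/-- `q_{2i} = c_{2i+1} c*_{2i} c_{2i−1}`. -/
noncomputable def qOp (a b i : ℤ) : Module.End ℂ (Hs a b) :=
  cAnn a b (2 * i + 1) * cCr a b (2 * i) * cAnn a b (2 * i - 1)

/-- The Nicolai supercharge `Q[k,l] = Σ_{i=k}^{l} q_{2i}`. -/
noncomputable def QNic (a b k l : ℤ) : Module.End ℂ (Hs a b) :=
  ∑ i ∈ Finset.Icc k l, qOp a b i

/-- Membership in `Ξ̂_{k,l}`: a `{−1,+1}`-valued function on `{2k, …, 2l}` with no
forbidden sign triplet at interior even sites, constant on each two-site edge. -/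
def memXi (k l : ℤ) (f : ℤ → ℤ) : Prop :=
  (∀ i ∈ Finset.Icc (2 * k) (2 * l), f i = 1 ∨ f i = -1) ∧
  (∀ i : ℤ, k < i → i < l →
    ¬(f (2 * i - 1) = -1 ∧ f (2 * i) = 1 ∧ f (2 * i + 1) = -1) ∧
    ¬(f (2 * i - 1) = 1 ∧ f (2 * i) = -1 ∧ f (2 * i + 1) = 1)) ∧
  f (2 * k) = f (2 * k + 1) ∧ f (2 * l - 1) = f (2 * l)

/-- `ζ_i(+1) = c*_i`, `ζ_i(−1) = c_i`. -/
noncomputable def zeta (a b i : ℤ) (v : ℤ) : Module.End ℂ (Hs a b) :=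
  if v = 1 then cCr a b i else if v = -1 then cAnn a b i else 0

/-- The local fermion operator `Q(f) = ζ_{2k}(f(2k)) ζ_{2k+1}(f(2k+1)) ⋯ ζ_{2l}(f(2l))`,
the product taken in increasing site order. -/
noncomputable def QF (a b k l : ℤ) (f : ℤ → ℤ) : Module.End ℂ (Hs a b) :=
  ((List.range (2 * l - 2 * k + 1).toNat).map
    (fun j => zeta a b (2 * k + (j : ℤ)) (f (2 * k + (j : ℤ))))).prod

/-- `g` has a forbidden triplet at the even site `2i`. -/
def forbiddenAt (g : ℤ → Bool) (i : ℤ) : Prop :=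
  (g (2 * i - 1) = false ∧ g (2 * i) = true ∧ g (2 * i + 1) = false) ∨
  (g (2 * i - 1) = true ∧ g (2 * i) = false ∧ g (2 * i + 1) = true)

/-- Membership in `Υ̂_{k,l}`: no forbidden triplet at interior even sites and the
open SUSY boundary condition (only the values on `{2k, …, 2l}` are relevant). -/
def memUps (k l : ℤ) (g : ℤ → Bool) : Prop :=
  (∀ i : ℤ, k < i → i < l → ¬ forbiddenAt g i) ∧
  g (2 * k) = g (2 * k + 1) ∧ g (2 * l - 1) = g (2 * l)

/-- Extend a configuration on `S` to all of `ℤ` by `false`. -/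
noncomputable def ext (a b : ℤ) (g : Config a b) : ℤ → Bool :=
  fun i => if h : i ∈ Finset.Icc a b then g ⟨i, h⟩ else false

/-- The charge `f ∈ Ξ̂_{k,l}` is applicable to the configuration `g`. -/
def applicable (k l : ℤ) (f : ℤ → ℤ) (g : ℤ → Bool) : Prop :=
  ∀ i : ℤ, 2 * k ≤ i → i ≤ 2 * l → (f i = 1 → g i = false) ∧ (f i = -1 → g i = true)

/-- The configuration `f·g` resulting from the action of the charge `f ∈ Ξ̂_{k,l}` on `g`. -/
def applyCharge (k l : ℤ) (f : ℤ → ℤ) (g : ℤ → Bool) : ℤ → Bool :=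
  fun i => if 2 * k ≤ i ∧ i ≤ 2 * l then decide (f i = 1) else g i

/-- `Reachable p q g₀ g`: `g` is obtained from `g₀` by finitely many applications of
applicable charges from `Ξ̂(p,q) = ⋃_{p ≤ k < l ≤ q} Ξ̂_{k,l}`. -/
inductive Reachable (p q : ℤ) : (ℤ → Bool) → (ℤ → Bool) → Prop
  | refl (g : ℤ → Bool) : Reachable p q g g
  | step {g₀ g : ℤ → Bool} (k l : ℤ) (f : ℤ → ℤ) :
      Reachable p q g₀ g → p ≤ k → k < l → l ≤ q → memXi k l f → applicable k l f g →
      Reachable p q g₀ (applyCharge k l f g)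

/-- The fermion parity operator `P e_g = (−1)^{#occupied sites} e_g`. -/
noncomputable def parity (a b : ℤ) : Module.End ℂ (Hs a b) where
  toFun ψ := WithLp.toLp 2 fun g =>
    ((-1 : ℂ) ^ (Finset.univ.filter fun j : {x : ℤ // x ∈ Finset.Icc a b} => g j = true).card)
      * ψ g
  map_add' ψ φ := by
    ext g
    simp only [PiLp.add_apply]
    ring
  map_smul' c ψ := by
    ext g
    simp only [PiLp.smul_apply, smul_eq_mul, RingHom.id_apply]
    ring

section Aux

variable {a b : ℤ}

/-- Update a configuration at integer site `j` (no-op outside `S`). -/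
def upd (g : Config a b) (j : ℤ) (v : Bool) : Config a b :=
  fun x => if x.1 = j then v else g x

lemma upd_self (g : Config a b) (j : ℤ) (v : Bool) (h : j ∈ Finset.Icc a b) :
    upd g j v ⟨j, h⟩ = v := by simp [upd]

lemma upd_ne (g : Config a b) (j : ℤ) (v : Bool) {m : ℤ} (h : m ∈ Finset.Icc a b)
    (hm : m ≠ j) : upd g j v ⟨m, h⟩ = g ⟨m, h⟩ := by simp [upd, hm]

lemma update_eq_upd (g : Config a b) {j : ℤ} (h : j ∈ Finset.Icc a b) (v : Bool) :
    Function.update g ⟨j, h⟩ v = upd g j v := by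
  funext x
  rcases x with ⟨m, hm⟩
  by_cases hmj : m = j
  · subst hmj; simp [upd, Function.update]
  · rw [Function.update_of_ne (by simp [Subtype.ext_iff, hmj])]
    simp [upd, hmj]

lemma upd_upd (g : Config a b) (j : ℤ) (v w : Bool) : upd (upd g j v) j w = upd g j w := by
  funext x; by_cases h : x.1 = j <;> simp [upd, h]

lemma upd_eq_self (g : Config a b) {j : ℤ} (h : j ∈ Finset.Icc a b) {v : Bool}
    (hv : g ⟨j, h⟩ = v) : upd g j v = g := by
  funext x
  rcases x with ⟨m, hm⟩
  by_cases hmj : m = j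
  · subst hmj; simp only [upd, if_pos rfl, ← hv]; rfl
  · simp [upd, hmj]

lemma signCount_upd (g : Config a b) (j i : ℤ) (v : Bool) (hij : i ≤ j) :
    signCount a b (upd g j v) i = signCount a b g i := by
  unfold signCount
  congr 1
  apply Finset.filter_congr
  intro x _
  by_cases hmj : x.1 = j
  · constructor <;> (rintro ⟨h1, h2⟩; omega)
  · simp [upd, hmj]

end Aux
section Aux2

variable {a b : ℤ}

lemma e_apply (g h : Config a b) : e a b g h = if h = g then 1 else 0 := by
  simp [e]

lemma e_apply_self (g : Config a b) : e a b g g = 1 := by simp [e_apply]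

lemma e_apply_ne (g h : Config a b) (hne : h ≠ g) : e a b g h = 0 := by
  simp [e_apply, hne]

lemma hs_eq_zero_iff (x : Hs a b) : x = 0 ↔ ∀ h : Config a b, x h = 0 := by
  constructor
  · intro hx h; rw [hx]; rfl
  · intro hx; ext h; exact hx h

lemma inner_e (h : Config a b) (x : Hs a b) : inner (𝕜 := ℂ) (e a b h) x = x h := by
  rw [e, EuclideanSpace.inner_single_left, map_one, one_mul]

lemma sum_apply'' {ι : Type*} (s : Finset ι) (v : ι → Hs a b) (h : Config a b) :
    (∑ i ∈ s, v i) h = ∑ i ∈ s, v i h := by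
  have h1 := inner_e h (∑ i ∈ s, v i)
  rw [inner_sum] at h1
  simp only [inner_e] at h1
  exact h1.symm

lemma cAnn_e (i : ℤ) (hi : i ∈ Finset.Icc a b) (g : Config a b) (hg : g ⟨i, hi⟩ = true) :
    cAnn a b i (e a b g) = ((-1 : ℂ) ^ signCount a b g i) • e a b (upd g i false) := by
  ext h
  show (if hdi : i ∈ Finset.Icc a b then
      if h ⟨i, hdi⟩ = false then
        ((-1 : ℂ) ^ signCount a b h i) * (e a b g) (Function.update h ⟨i, hdi⟩ true)
      else 0
    else 0) = (((-1 : ℂ) ^ signCount a b g i) • e a b (upd g i false)) h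
  rw [dif_pos hi]
  have hrhs : (((-1 : ℂ) ^ signCount a b g i) • e a b (upd g i false)) h
      = ((-1 : ℂ) ^ signCount a b g i) * (e a b (upd g i false)) h := rfl
  rw [hrhs, update_eq_upd]
  by_cases hc : h = upd g i false
  · subst hc
    rw [if_pos (upd_self g i false hi), upd_upd, upd_eq_self g hi hg,
      signCount_upd g i i false le_rfl, e_apply_self, e_apply_self]
  · by_cases hb : h ⟨i, hi⟩ = false
    · rw [if_pos hb, e_apply_ne, e_apply_ne _ _ hc, mul_zero, mul_zero]
      intro heq
      apply hc
      have : upd (upd h i true) i false = upd g i false := by rw [heq]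
      rwa [upd_upd, upd_eq_self h hi hb] at this
    · rw [if_neg hb, e_apply_ne _ _ hc, mul_zero]

lemma cAnn_e_zero (i : ℤ) (hi : i ∈ Finset.Icc a b) (g : Config a b)
    (hg : g ⟨i, hi⟩ = false) : cAnn a b i (e a b g) = 0 := by
  ext h
  show (if hdi : i ∈ Finset.Icc a b then
      if h ⟨i, hdi⟩ = false then
        ((-1 : ℂ) ^ signCount a b h i) * (e a b g) (Function.update h ⟨i, hdi⟩ true)
      else 0
    else 0) = (0 : Hs a b) h
  rw [dif_pos hi]
  have h0 : (0 : Hs a b) h = 0 := rfl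
  rw [h0]
  by_cases hb : h ⟨i, hi⟩ = false
  · rw [if_pos hb, update_eq_upd, e_apply_ne, mul_zero]
    intro heq
    rw [← heq] at hg
    rw [upd_self h i true hi] at hg
    exact Bool.noConfusion hg
  · rw [if_neg hb]

lemma cCr_e (i : ℤ) (hi : i ∈ Finset.Icc a b) (g : Config a b) (hg : g ⟨i, hi⟩ = false) :
    cCr a b i (e a b g) = ((-1 : ℂ) ^ signCount a b g i) • e a b (upd g i true) := by
  ext h
  show (if hdi : i ∈ Finset.Icc a b then
      if h ⟨i, hdi⟩ = true then
        ((-1 : ℂ) ^ signCount a b h i) * (e a b g) (Function.update h ⟨i, hdi⟩ false)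
      else 0
    else 0) = (((-1 : ℂ) ^ signCount a b g i) • e a b (upd g i true)) h
  rw [dif_pos hi]
  have hrhs : (((-1 : ℂ) ^ signCount a b g i) • e a b (upd g i true)) h
      = ((-1 : ℂ) ^ signCount a b g i) * (e a b (upd g i true)) h := rfl
  rw [hrhs, update_eq_upd]
  by_cases hc : h = upd g i true
  · subst hc
    rw [if_pos (upd_self g i true hi), upd_upd, upd_eq_self g hi hg,
      signCount_upd g i i true le_rfl, e_apply_self, e_apply_self]
  · by_cases hb : h ⟨i, hi⟩ = true
    · rw [if_pos hb, e_apply_ne, e_apply_ne _ _ hc, mul_zero, mul_zero]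
      intro heq
      apply hc
      have : upd (upd h i false) i true = upd g i true := by rw [heq]
      rwa [upd_upd, upd_eq_self h hi hb] at this
    · rw [if_neg hb, e_apply_ne _ _ hc, mul_zero]

lemma cCr_e_zero (i : ℤ) (hi : i ∈ Finset.Icc a b) (g : Config a b)
    (hg : g ⟨i, hi⟩ = true) : cCr a b i (e a b g) = 0 := by
  ext h
  show (if hdi : i ∈ Finset.Icc a b then
      if h ⟨i, hdi⟩ = true then
        ((-1 : ℂ) ^ signCount a b h i) * (e a b g) (Function.update h ⟨i, hdi⟩ false)
      else 0
    else 0) = (0 : Hs a b) h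
  rw [dif_pos hi]
  have h0 : (0 : Hs a b) h = 0 := rfl
  rw [h0]
  by_cases hb : h ⟨i, hi⟩ = true
  · rw [if_pos hb, update_eq_upd, e_apply_ne, mul_zero]
    intro heq
    rw [← heq] at hg
    rw [upd_self h i false hi] at hg
    exact Bool.noConfusion hg
  · rw [if_neg hb]

end Aux2
section Aux3

variable {a b : ℤ}

/-- Result of applying `q_{2i}` to a configuration with the `(T,F,T)` pattern at `2i`. -/
def flipA (g : Config a b) (i : ℤ) : Config a b :=
  upd (upd (upd g (2*i-1) false) (2*i) true) (2*i+1) false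

/-- Result of applying `q_{2i}*` to a configuration with the `(F,T,F)` pattern at `2i`. -/
def flipC (g : Config a b) (i : ℤ) : Config a b :=
  upd (upd (upd g (2*i-1) true) (2*i) false) (2*i+1) true

lemma flipA_apply (g : Config a b) (i : ℤ) {m : ℤ} (hm : m ∈ Finset.Icc a b) :
    flipA g i ⟨m, hm⟩ = if m = 2*i+1 then false else if m = 2*i then true
      else if m = 2*i-1 then false else g ⟨m, hm⟩ := by
  simp [flipA, upd]

lemma flipC_apply (g : Config a b) (i : ℤ) {m : ℤ} (hm : m ∈ Finset.Icc a b) :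
    flipC g i ⟨m, hm⟩ = if m = 2*i+1 then true else if m = 2*i then false
      else if m = 2*i-1 then true else g ⟨m, hm⟩ := by
  simp [flipC, upd]

lemma qOp_e_pat (i : ℤ) (h1 : 2*i-1 ∈ Finset.Icc a b) (h2 : 2*i ∈ Finset.Icc a b)
    (h3 : 2*i+1 ∈ Finset.Icc a b) (g : Config a b)
    (p1 : g ⟨2*i-1, h1⟩ = true) (p2 : g ⟨2*i, h2⟩ = false) (p3 : g ⟨2*i+1, h3⟩ = true) :
    ∃ σ : ℂ, σ ≠ 0 ∧ qOp a b i (e a b g) = σ • e a b (flipA g i) := by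
  have s1 := cAnn_e (2*i-1) h1 g p1
  set g1 := upd g (2*i-1) false with hg1
  have q2 : g1 ⟨2*i, h2⟩ = false := by
    rw [hg1, upd_ne _ _ _ h2 (by omega)]; exact p2
  have s2 := cCr_e (2*i) h2 g1 q2
  set g2 := upd g1 (2*i) true with hg2
  have q3 : g2 ⟨2*i+1, h3⟩ = true := by
    rw [hg2, upd_ne _ _ _ h3 (by omega), hg1, upd_ne _ _ _ h3 (by omega)]; exact p3
  have s3 := cAnn_e (2*i+1) h3 g2 q3
  refine ⟨((-1 : ℂ) ^ signCount a b g (2*i-1)) * ((-1 : ℂ) ^ signCount a b g1 (2*i))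
    * ((-1 : ℂ) ^ signCount a b g2 (2*i+1)), ?_, ?_⟩
  · exact mul_ne_zero (mul_ne_zero (pow_ne_zero _ (by norm_num)) (pow_ne_zero _ (by norm_num)))
      (pow_ne_zero _ (by norm_num))
  · show (cAnn a b (2*i+1) * cCr a b (2*i) * cAnn a b (2*i-1)) (e a b g) = _
    rw [Module.End.mul_apply, Module.End.mul_apply, s1, map_smul, s2, map_smul, map_smul, s3,
      smul_smul, smul_smul]
    rfl

lemma qOp_e_zero (i : ℤ) (h1 : 2*i-1 ∈ Finset.Icc a b) (h2 : 2*i ∈ Finset.Icc a b)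
    (h3 : 2*i+1 ∈ Finset.Icc a b) (g : Config a b)
    (hnp : ¬(g ⟨2*i-1, h1⟩ = true ∧ g ⟨2*i, h2⟩ = false ∧ g ⟨2*i+1, h3⟩ = true)) :
    qOp a b i (e a b g) = 0 := by
  show (cAnn a b (2*i+1) * cCr a b (2*i) * cAnn a b (2*i-1)) (e a b g) = 0
  rw [Module.End.mul_apply, Module.End.mul_apply]
  by_cases c1 : g ⟨2*i-1, h1⟩ = true
  · rw [cAnn_e (2*i-1) h1 g c1, map_smul]
    set g1 := upd g (2*i-1) false with hg1
    have e2 : g1 ⟨2*i, h2⟩ = g ⟨2*i, h2⟩ := by rw [hg1, upd_ne _ _ _ h2 (by omega)]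
    by_cases c2 : g ⟨2*i, h2⟩ = false
    · rw [cCr_e (2*i) h2 g1 (e2.trans c2), map_smul, map_smul]
      set g2 := upd g1 (2*i) true with hg2
      have e3 : g2 ⟨2*i+1, h3⟩ = g ⟨2*i+1, h3⟩ := by
        rw [hg2, upd_ne _ _ _ h3 (by omega), hg1, upd_ne _ _ _ h3 (by omega)]
      have c3 : g ⟨2*i+1, h3⟩ = false := by
        cases h : g ⟨2*i+1, h3⟩
        · rfl
        · exact absurd ⟨c1, c2, h⟩ hnp
      rw [cAnn_e_zero (2*i+1) h3 g2 (e3.trans c3), smul_zero, smul_zero]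
    · have c2' : g1 ⟨2*i, h2⟩ = true := by
        rw [e2]; cases h : g ⟨2*i, h2⟩
        · exact absurd h c2
        · rfl
      rw [cCr_e_zero (2*i) h2 g1 c2', smul_zero, map_zero]
  · have c1' : g ⟨2*i-1, h1⟩ = false := by
      cases h : g ⟨2*i-1, h1⟩
      · rfl
      · exact absurd h c1
    rw [cAnn_e_zero (2*i-1) h1 g c1', map_zero, map_zero]

lemma flipA_ne {g : Config a b} {i i' : ℤ} (hii' : i ≠ i') (mem : 2*i ∈ Finset.Icc a b)
    (p2 : g ⟨2*i, mem⟩ = false) : flipA g i ≠ flipA g i' := by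
  intro hEq
  have hL : flipA g i ⟨2*i, mem⟩ = true := by
    rw [flipA_apply]
    rw [if_neg (show ¬((2*i : ℤ) = 2*i+1) by omega), if_pos rfl]
  have hR : flipA g i' ⟨2*i, mem⟩ = false := by
    rw [flipA_apply]
    rw [if_neg (show ¬((2*i : ℤ) = 2*i'+1) by omega),
      if_neg (show ¬((2*i : ℤ) = 2*i') by omega),
      if_neg (show ¬((2*i : ℤ) = 2*i'-1) by omega)]
    exact p2
  rw [hEq, hR] at hL
  exact Bool.noConfusion hL

lemma flipA_flipC (g : Config a b) (i : ℤ) (m1 : 2*i-1 ∈ Finset.Icc a b)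
    (m2 : 2*i ∈ Finset.Icc a b) (m3 : 2*i+1 ∈ Finset.Icc a b)
    (p1 : g ⟨2*i-1, m1⟩ = false) (p2 : g ⟨2*i, m2⟩ = true) (p3 : g ⟨2*i+1, m3⟩ = false) :
    flipA (flipC g i) i = g := by
  funext x
  rcases x with ⟨m, hm⟩
  rw [flipA_apply, flipC_apply]
  by_cases c3 : m = 2*i+1
  · rw [if_pos c3]
    subst c3
    exact p3.symm
  · rw [if_neg c3]
    by_cases c2 : m = 2*i
    · rw [if_pos c2]
      subst c2
      exact p2.symm
    · rw [if_neg c2]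
      by_cases c1 : m = 2*i-1
      · rw [if_pos c1]
        subst c1
        exact p1.symm
      · rw [if_neg c1, if_neg c3, if_neg c2, if_neg c1]

end Aux3
section Aux4

lemma mem1 {k l i : ℤ} (hk : k ≤ i) (hl : i ≤ l) :
    2*i-1 ∈ Finset.Icc (2*k-1) (2*l+1) := by rw [Finset.mem_Icc]; omega

lemma mem2 {k l i : ℤ} (hk : k ≤ i) (hl : i ≤ l) :
    2*i ∈ Finset.Icc (2*k-1) (2*l+1) := by rw [Finset.mem_Icc]; omega

lemma mem3 {k l i : ℤ} (hk : k ≤ i) (hl : i ≤ l) :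
    2*i+1 ∈ Finset.Icc (2*k-1) (2*l+1) := by rw [Finset.mem_Icc]; omega

lemma QNic_e_zero_iff (k l : ℤ) (g : Config (2*k-1) (2*l+1)) :
    QNic (2*k-1) (2*l+1) k l (e (2*k-1) (2*l+1) g) = 0 ↔
    ∀ i : ℤ, ∀ (hk : k ≤ i) (hl : i ≤ l),
      ¬(g ⟨2*i-1, mem1 hk hl⟩ = true ∧ g ⟨2*i, mem2 hk hl⟩ = false
        ∧ g ⟨2*i+1, mem3 hk hl⟩ = true) := by
  rw [QNic, LinearMap.sum_apply]
  constructor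
  · intro hz i hk hl hp
    obtain ⟨σ, hσ, hq⟩ :=
      qOp_e_pat i (mem1 hk hl) (mem2 hk hl) (mem3 hk hl) g hp.1 hp.2.1 hp.2.2
    have h0 : (∑ j ∈ Finset.Icc k l,
        qOp (2*k-1) (2*l+1) j (e (2*k-1) (2*l+1) g)) (flipA g i) = 0 := by
      rw [hz]; rfl
    rw [sum_apply''] at h0
    rw [Finset.sum_eq_single_of_mem i (Finset.mem_Icc.mpr ⟨hk, hl⟩)] at h0
    · rw [hq] at h0
      have hval : (σ • e (2*k-1) (2*l+1) (flipA g i)) (flipA g i)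
          = σ * (e (2*k-1) (2*l+1) (flipA g i)) (flipA g i) := rfl
      rw [hval, e_apply_self, mul_one] at h0
      exact hσ h0
    · intro j hj hne
      have hkj : k ≤ j := (Finset.mem_Icc.mp hj).1
      have hlj : j ≤ l := (Finset.mem_Icc.mp hj).2
      by_cases hpj : g ⟨2*j-1, mem1 hkj hlj⟩ = true ∧ g ⟨2*j, mem2 hkj hlj⟩ = false
          ∧ g ⟨2*j+1, mem3 hkj hlj⟩ = true
      · obtain ⟨σ', hσ', hq'⟩ :=
          qOp_e_pat j (mem1 hkj hlj) (mem2 hkj hlj) (mem3 hkj hlj) g hpj.1 hpj.2.1 hpj.2.2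
        rw [hq']
        have hval : (σ' • e (2*k-1) (2*l+1) (flipA g j)) (flipA g i)
            = σ' * (e (2*k-1) (2*l+1) (flipA g j)) (flipA g i) := rfl
        rw [hval, e_apply_ne _ _ (flipA_ne hne (mem2 hkj hlj) hpj.2.1).symm, mul_zero]
      · rw [qOp_e_zero j (mem1 hkj hlj) (mem2 hkj hlj) (mem3 hkj hlj) g hpj]; rfl
  · intro hnp
    apply Finset.sum_eq_zero
    intro j hj
    exact qOp_e_zero j (mem1 (Finset.mem_Icc.mp hj).1 (Finset.mem_Icc.mp hj).2)
      (mem2 (Finset.mem_Icc.mp hj).1 (Finset.mem_Icc.mp hj).2)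
      (mem3 (Finset.mem_Icc.mp hj).1 (Finset.mem_Icc.mp hj).2) g
      (hnp j (Finset.mem_Icc.mp hj).1 (Finset.mem_Icc.mp hj).2)

lemma QNic_adj_key (k l : ℤ) (g h : Config (2*k-1) (2*l+1)) :
    (LinearMap.adjoint (QNic (2*k-1) (2*l+1) k l) (e (2*k-1) (2*l+1) g)) h
    = ∑ i ∈ Finset.Icc k l,
        inner (𝕜 := ℂ) (qOp (2*k-1) (2*l+1) i (e (2*k-1) (2*l+1) h))
          (e (2*k-1) (2*l+1) g) := by
  have t1 : ((LinearMap.adjoint (QNic (2*k-1) (2*l+1) k l)) (e (2*k-1) (2*l+1) g)) h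
      = inner (𝕜 := ℂ) (QNic (2*k-1) (2*l+1) k l (e (2*k-1) (2*l+1) h))
          (e (2*k-1) (2*l+1) g) := by
    rw [← LinearMap.adjoint_inner_right, inner_e]
  rw [t1, QNic, LinearMap.sum_apply, sum_inner]

lemma QNic_adj_e_zero_iff (k l : ℤ) (g : Config (2*k-1) (2*l+1)) :
    LinearMap.adjoint (QNic (2*k-1) (2*l+1) k l) (e (2*k-1) (2*l+1) g) = 0 ↔
    ∀ i : ℤ, ∀ (hk : k ≤ i) (hl : i ≤ l),
      ¬(g ⟨2*i-1, mem1 hk hl⟩ = false ∧ g ⟨2*i, mem2 hk hl⟩ = true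
        ∧ g ⟨2*i+1, mem3 hk hl⟩ = false) := by
  rw [hs_eq_zero_iff]
  constructor
  · intro hz i hk hl hp
    have h0 := hz (flipC g i)
    rw [QNic_adj_key] at h0
    have v1 : flipC g i ⟨2*i-1, mem1 hk hl⟩ = true := by
      rw [flipC_apply, if_neg (show ¬((2*i-1 : ℤ) = 2*i+1) by omega),
        if_neg (show ¬((2*i-1 : ℤ) = 2*i) by omega), if_pos rfl]
    have v2 : flipC g i ⟨2*i, mem2 hk hl⟩ = false := by
      rw [flipC_apply, if_neg (show ¬((2*i : ℤ) = 2*i+1) by omega), if_pos rfl]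
    have v3 : flipC g i ⟨2*i+1, mem3 hk hl⟩ = true := by
      rw [flipC_apply, if_pos rfl]
    obtain ⟨σ, hσ, hq⟩ :=
      qOp_e_pat i (mem1 hk hl) (mem2 hk hl) (mem3 hk hl) (flipC g i) v1 v2 v3
    rw [Finset.sum_eq_single_of_mem i (Finset.mem_Icc.mpr ⟨hk, hl⟩)] at h0
    · rw [hq, inner_smul_left, inner_e,
        flipA_flipC g i (mem1 hk hl) (mem2 hk hl) (mem3 hk hl) hp.1 hp.2.1 hp.2.2,
        e_apply_self, mul_one, starRingEnd_apply, star_eq_zero] at h0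
      exact hσ h0
    · intro j hj hne
      have hkj : k ≤ j := (Finset.mem_Icc.mp hj).1
      have hlj : j ≤ l := (Finset.mem_Icc.mp hj).2
      by_cases hpj : flipC g i ⟨2*j-1, mem1 hkj hlj⟩ = true
          ∧ flipC g i ⟨2*j, mem2 hkj hlj⟩ = false
          ∧ flipC g i ⟨2*j+1, mem3 hkj hlj⟩ = true
      · obtain ⟨σ', hσ', hq'⟩ := qOp_e_pat j (mem1 hkj hlj) (mem2 hkj hlj) (mem3 hkj hlj)
          (flipC g i) hpj.1 hpj.2.1 hpj.2.2
        rw [hq', inner_smul_left, inner_e, e_apply_ne, mul_zero]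
        exact fun hEq => (flipA_ne hne (mem2 hkj hlj) hpj.2.1)
          (hEq.trans (flipA_flipC g i (mem1 hk hl) (mem2 hk hl) (mem3 hk hl)
            hp.1 hp.2.1 hp.2.2).symm)
      · rw [qOp_e_zero j (mem1 hkj hlj) (mem2 hkj hlj) (mem3 hkj hlj) (flipC g i) hpj,
          inner_zero_left]
  · intro hnp h
    rw [QNic_adj_key]
    apply Finset.sum_eq_zero
    intro j hj
    have hkj : k ≤ j := (Finset.mem_Icc.mp hj).1
    have hlj : j ≤ l := (Finset.mem_Icc.mp hj).2
    by_cases hpj : h ⟨2*j-1, mem1 hkj hlj⟩ = true ∧ h ⟨2*j, mem2 hkj hlj⟩ = false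
        ∧ h ⟨2*j+1, mem3 hkj hlj⟩ = true
    · obtain ⟨σ', hσ', hq'⟩ := qOp_e_pat j (mem1 hkj hlj) (mem2 hkj hlj) (mem3 hkj hlj)
        h hpj.1 hpj.2.1 hpj.2.2
      rw [hq', inner_smul_left, inner_e, e_apply_ne, mul_zero]
      intro hEq
      apply hnp j hkj hlj
      refine ⟨?_, ?_, ?_⟩
      · rw [← hEq, flipA_apply, if_neg (show ¬((2*j-1 : ℤ) = 2*j+1) by omega),
          if_neg (show ¬((2*j-1 : ℤ) = 2*j) by omega), if_pos rfl]
      · rw [← hEq, flipA_apply, if_neg (show ¬((2*j : ℤ) = 2*j+1) by omega), if_pos rfl]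
      · rw [← hEq, flipA_apply, if_pos rfl]
    · rw [qOp_e_zero j (mem1 hkj hlj) (mem2 hkj hlj) (mem3 hkj hlj) h hpj, inner_zero_left]

end Aux4
/-- a classical state on `{2k, …, 2l}` is open-edge supersymmetric
(every extension to `S = {2k−1, …, 2l+1}` is annihilated by `Q[k,l]` and `Q[k,l]*`)
iff its configuration belongs to `Υ̂_{k,l}`. -/
theorem open_edge_susy_classical_iff (k l : ℤ) (hkl : k < l) (g : ℤ → Bool) :
    (∀ gext : Config (2 * k - 1) (2 * l + 1),
        (∀ (i : ℤ) (h : i ∈ Finset.Icc (2 * k - 1) (2 * l + 1)),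
          2 * k ≤ i → i ≤ 2 * l → gext ⟨i, h⟩ = g i) →
        QNic (2 * k - 1) (2 * l + 1) k l (e (2 * k - 1) (2 * l + 1) gext) = 0 ∧
        LinearMap.adjoint (QNic (2 * k - 1) (2 * l + 1) k l)
          (e (2 * k - 1) (2 * l + 1) gext) = 0)
    ↔ memUps k l g := by
  constructor
  · intro H
    refine ⟨?_, ?_, ?_⟩
    · -- no forbidden triplet at interior sites
      intro i hki hil hf
      obtain ⟨hQ, hQa⟩ := H (fun x => g x.1) (fun i h _ _ => rfl)
      rw [QNic_e_zero_iff] at hQ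
      rw [QNic_adj_e_zero_iff] at hQa
      rcases hf with hf | hf
      · exact hQa i hki.le hil.le ⟨hf.1, hf.2.1, hf.2.2⟩
      · exact hQ i hki.le hil.le ⟨hf.1, hf.2.1, hf.2.2⟩
    · -- left boundary condition
      by_contra hne
      have hcomp : ∀ (i : ℤ) (h : i ∈ Finset.Icc (2*k-1) (2*l+1)), 2*k ≤ i → i ≤ 2*l →
          (fun x : {x : ℤ // x ∈ Finset.Icc (2*k-1) (2*l+1)} =>
            if x.1 = 2*k-1 then g (2*k+1) else g x.1) ⟨i, h⟩ = g i := by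
        intro i h hi1 hi2
        show (if i = 2*k-1 then g (2*k+1) else g i) = g i
        rw [if_neg (by omega)]
      obtain ⟨hQ, hQa⟩ := H (fun x : {x : ℤ // x ∈ Finset.Icc (2*k-1) (2*l+1)} =>
        if x.1 = 2*k-1 then g (2*k+1) else g x.1) hcomp
      rw [QNic_e_zero_iff] at hQ
      rw [QNic_adj_e_zero_iff] at hQa
      have w1 : (fun x : {x : ℤ // x ∈ Finset.Icc (2*k-1) (2*l+1)} =>
          if x.1 = 2*k-1 then g (2*k+1) else g x.1) ⟨2*k-1, mem1 le_rfl hkl.le⟩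
          = g (2*k+1) := if_pos rfl
      have w2 : (fun x : {x : ℤ // x ∈ Finset.Icc (2*k-1) (2*l+1)} =>
          if x.1 = 2*k-1 then g (2*k+1) else g x.1) ⟨2*k, mem2 le_rfl hkl.le⟩
          = g (2*k) := if_neg (show ¬((2*k:ℤ) = 2*k-1) by omega)
      have w3 : (fun x : {x : ℤ // x ∈ Finset.Icc (2*k-1) (2*l+1)} =>
          if x.1 = 2*k-1 then g (2*k+1) else g x.1) ⟨2*k+1, mem3 le_rfl hkl.le⟩
          = g (2*k+1) := if_neg (show ¬((2*k+1:ℤ) = 2*k-1) by omega)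
      cases hb : g (2*k+1)
      · have h2 : g (2*k) = true := by
          rw [hb] at hne
          cases hgk2 : g (2*k)
          · exact absurd hgk2 hne
          · rfl
        exact hQa k le_rfl hkl.le ⟨w1.trans hb, w2.trans h2, w3.trans hb⟩
      · have h2 : g (2*k) = false := by
          rw [hb] at hne
          cases hgk2 : g (2*k)
          · rfl
          · exact absurd hgk2 hne
        exact hQ k le_rfl hkl.le ⟨w1.trans hb, w2.trans h2, w3.trans hb⟩
    · -- right boundary condition
      by_contra hne
      have hcomp : ∀ (i : ℤ) (h : i ∈ Finset.Icc (2*k-1) (2*l+1)), 2*k ≤ i → i ≤ 2*l →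
          (fun x : {x : ℤ // x ∈ Finset.Icc (2*k-1) (2*l+1)} =>
            if x.1 = 2*l+1 then g (2*l-1) else g x.1) ⟨i, h⟩ = g i := by
        intro i h hi1 hi2
        show (if i = 2*l+1 then g (2*l-1) else g i) = g i
        rw [if_neg (by omega)]
      obtain ⟨hQ, hQa⟩ := H (fun x : {x : ℤ // x ∈ Finset.Icc (2*k-1) (2*l+1)} =>
        if x.1 = 2*l+1 then g (2*l-1) else g x.1) hcomp
      rw [QNic_e_zero_iff] at hQ
      rw [QNic_adj_e_zero_iff] at hQa
      have w1 : (fun x : {x : ℤ // x ∈ Finset.Icc (2*k-1) (2*l+1)} =>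
          if x.1 = 2*l+1 then g (2*l-1) else g x.1) ⟨2*l-1, mem1 hkl.le le_rfl⟩
          = g (2*l-1) := if_neg (show ¬((2*l-1:ℤ) = 2*l+1) by omega)
      have w2 : (fun x : {x : ℤ // x ∈ Finset.Icc (2*k-1) (2*l+1)} =>
          if x.1 = 2*l+1 then g (2*l-1) else g x.1) ⟨2*l, mem2 hkl.le le_rfl⟩
          = g (2*l) := if_neg (show ¬((2*l:ℤ) = 2*l+1) by omega)
      have w3 : (fun x : {x : ℤ // x ∈ Finset.Icc (2*k-1) (2*l+1)} =>
          if x.1 = 2*l+1 then g (2*l-1) else g x.1) ⟨2*l+1, mem3 hkl.le le_rfl⟩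
          = g (2*l-1) := if_pos rfl
      cases hb : g (2*l-1)
      · have h2 : g (2*l) = true := by
          rw [hb] at hne
          cases hgl2 : g (2*l)
          · exact absurd (hgl2.symm.trans rfl) (by simpa [hgl2] using hne)
          · rfl
        exact hQa l hkl.le le_rfl ⟨w1.trans hb, w2.trans h2, w3.trans hb⟩
      · have h2 : g (2*l) = false := by
          rw [hb] at hne
          cases hgl2 : g (2*l)
          · rfl
          · exact absurd hgl2.symm (by simpa [hgl2] using hne)
        exact hQ l hkl.le le_rfl ⟨w1.trans hb, w2.trans h2, w3.trans hb⟩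
  · rintro ⟨hint, hbk, hbl⟩ gext hcomp
    constructor
    · rw [QNic_e_zero_iff]
      intro i hk' hl' hp
      by_cases hik : i = k
      · subst hik
        have e2 : g (2*i) = false := by
          rw [← hcomp (2*i) (mem2 hk' hl') (by omega) (by omega)]; exact hp.2.1
        have e3 : g (2*i+1) = true := by
          rw [← hcomp (2*i+1) (mem3 hk' hl') (by omega) (by omega)]; exact hp.2.2
        rw [hbk] at e2
        exact Bool.noConfusion (e3.symm.trans e2)
      · by_cases hil : i = l
        · subst hil
          have e1 : g (2*i-1) = true := by
            rw [← hcomp (2*i-1) (mem1 hk' hl') (by omega) (by omega)]; exact hp.1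
          have e2 : g (2*i) = false := by
            rw [← hcomp (2*i) (mem2 hk' hl') (by omega) (by omega)]; exact hp.2.1
          rw [hbl] at e1
          exact Bool.noConfusion (e1.symm.trans e2)
        · have hki : k < i := lt_of_le_of_ne hk' (Ne.symm hik)
          have hil' : i < l := lt_of_le_of_ne hl' hil
          apply hint i hki hil'
          right
          refine ⟨?_, ?_, ?_⟩
          · rw [← hcomp (2*i-1) (mem1 hk' hl') (by omega) (by omega)]; exact hp.1
          · rw [← hcomp (2*i) (mem2 hk' hl') (by omega) (by omega)]; exact hp.2.1
          · rw [← hcomp (2*i+1) (mem3 hk' hl') (by omega) (by omega)]; exact hp.2.2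
    · rw [QNic_adj_e_zero_iff]
      intro i hk' hl' hp
      by_cases hik : i = k
      · subst hik
        have e2 : g (2*i) = true := by
          rw [← hcomp (2*i) (mem2 hk' hl') (by omega) (by omega)]; exact hp.2.1
        have e3 : g (2*i+1) = false := by
          rw [← hcomp (2*i+1) (mem3 hk' hl') (by omega) (by omega)]; exact hp.2.2
        rw [hbk] at e2
        exact Bool.noConfusion (e3.symm.trans e2)
      · by_cases hil : i = l
        · subst hil
          have e1 : g (2*i-1) = false := by
            rw [← hcomp (2*i-1) (mem1 hk' hl') (by omega) (by omega)]; exact hp.1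
          have e2 : g (2*i) = true := by
            rw [← hcomp (2*i) (mem2 hk' hl') (by omega) (by omega)]; exact hp.2.1
          rw [hbl] at e1
          exact Bool.noConfusion (e1.symm.trans e2)
        · have hki : k < i := lt_of_le_of_ne hk' (Ne.symm hik)
          have hil' : i < l := lt_of_le_of_ne hl' hil
          apply hint i hki hil'
          left
          refine ⟨?_, ?_, ?_⟩
          · rw [← hcomp (2*i-1) (mem1 hk' hl') (by omega) (by omega)]; exact hp.1
          · rw [← hcomp (2*i) (mem2 hk' hl') (by omega) (by omega)]; exact hp.2.1
          · rw [← hcomp (2*i+1) (mem3 hk' hl') (by omega) (by omega)]; exact hp.2.2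

end Nicolai
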